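/- Let n ≥ 2, let A : ℝ → ℝ^{n×n} be continuous, and let X : ℝ → ℝ^{n×n} be differentiable with X(t) skew-symmetric for every t. Then X satisfies the matrix differential equation Ẋ(t) = A(t)X(t) + X(t)A(t)ᵀ for all t if and only if the vector vec⃗(X(t)) satisfies d/dt vec⃗(X(t)) = A(t)^{[2]} vec⃗(X(t)) for all t. -/
import Mathlib


open Matrix
open scoped Kronecker

/-- Row (row-major) vectorisation of an `m × n` real matrix. -/
def vecr {m n : ℕ} (X : Matrix (Fin m) (Fin n) ℝ) : Fin m × Fin n → ℝ :=
  fun p => X p.1 p.2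

/-- Strict upper row half-vectorisation of an `n × n` real matrix, indexed by pairs
`(i, j)` with `i < j` in lexicographic order. -/
def svec (n : ℕ) (X : Matrix (Fin n) (Fin n) ℝ) :
    {p : Fin n × Fin n // p.1 < p.2} → ℝ :=
  fun p => X p.1.1 p.1.2

/-- The matrix `Mₙ = Σ_{i ≠ j} sign(j - i) e_{(i-1)n+j} e_{k(i,j)}ᵀ`. -/
def Mmat (n : ℕ) : Matrix (Fin n × Fin n) {p : Fin n × Fin n // p.1 < p.2} ℝ :=
  fun q p => if q = p.1 then 1 else if q = (p.1.2, p.1.1) then -1 else 0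

/-- The matrix `Lₙ = Σ_{i < j} e_{k(i,j)} e_{(i-1)n+j}ᵀ`. -/
def Lmat (n : ℕ) : Matrix {p : Fin n × Fin n // p.1 < p.2} (Fin n × Fin n) ℝ :=
  fun p q => if q = p.1 then 1 else 0

/-- The second additive compound `A^{[2]} = Lₙ (A ⊗ Iₙ + Iₙ ⊗ A) Mₙ`. -/
noncomputable def addComp (n : ℕ) (A : Matrix (Fin n) (Fin n) ℝ) :
    Matrix {p : Fin n × Fin n // p.1 < p.2} {p : Fin n × Fin n // p.1 < p.2} ℝ :=
  Lmat n * (A ⊗ₖ (1 : Matrix (Fin n) (Fin n) ℝ) + (1 : Matrix (Fin n) (Fin n) ℝ) ⊗ₖ A) * Mmat n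

lemma key {n : ℕ} (A X : Matrix (Fin n) (Fin n) ℝ) (hX : Xᵀ = -X)
    (p : {p : Fin n × Fin n // p.1 < p.2}) :
    (addComp n A).mulVec (svec n X) p = (A * X + X * Aᵀ) p.1.1 p.1.2 := by
  classical
  obtain ⟨⟨i, j⟩, hij⟩ := p
  have hXs : ∀ k l : Fin n, X l k = -X k l := by
    intro k l
    have := congrFun (congrFun hX k) l
    simpa [Matrix.transpose_apply] using this
  have hXd : ∀ k : Fin n, X k k = 0 := by
    intro k; have := hXs k k; linarith
  set B := A ⊗ₖ (1 : Matrix (Fin n) (Fin n) ℝ) + (1 : Matrix (Fin n) (Fin n) ℝ) ⊗ₖ A with hB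
  set g : Fin n × Fin n → ℝ := fun q => B (i, j) q * X q.1 q.2 with hg
  -- entries of addComp
  have hMA : ∀ q : {p : Fin n × Fin n // p.1 < p.2},
      addComp n A ⟨(i, j), hij⟩ q = B (i, j) q.1 - B (i, j) (q.1.2, q.1.1) := by
    intro q
    have hqne : (q.1 : Fin n × Fin n) ≠ (q.1.2, q.1.1) := by
      intro h
      have h1 := congrArg Prod.fst h
      exact absurd (h1 ▸ q.2) (lt_irrefl _)
    rw [addComp, Matrix.mul_assoc, Matrix.mul_apply, ← hB]
    rw [Finset.sum_congr rfl fun a _ => show Lmat n ⟨(i,j),hij⟩ a * (B * Mmat n) a q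
        = if a = ((i,j) : Fin n × Fin n) then (B * Mmat n) (i,j) q else 0 from by
      simp only [Lmat]
      split_ifs with h <;> simp [h]]
    rw [Finset.sum_ite_eq' Finset.univ ((i,j) : Fin n × Fin n)]
    simp only [Finset.mem_univ, if_true]
    rw [Matrix.mul_apply]
    have hterm : ∀ b : Fin n × Fin n, B (i, j) b * Mmat n b q
        = (if b = q.1 then B (i, j) q.1 else 0)
          + (if b = (q.1.2, q.1.1) then -(B (i, j) (q.1.2, q.1.1)) else 0) := by
      intro b
      by_cases h1 : b = q.1
      · subst h1
        simp [Mmat, if_neg hqne]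
      · by_cases h2 : b = ((q.1.2, q.1.1) : Fin n × Fin n)
        · subst h2
          rw [Mmat]
          rw [if_neg (fun hh => hqne hh.symm), if_pos rfl, if_neg h1, if_pos rfl]
          ring
        · simp only [Mmat, if_neg h1, if_neg h2, mul_zero, add_zero, zero_add]
    rw [Finset.sum_congr rfl fun b _ => hterm b, Finset.sum_add_distrib,
      Finset.sum_ite_eq' Finset.univ (q.1 : Fin n × Fin n),
      Finset.sum_ite_eq' Finset.univ ((q.1.2, q.1.1) : Fin n × Fin n)]
    simp [sub_eq_add_neg]
  -- mulVec
  have hmv : (addComp n A).mulVec (svec n X) ⟨(i, j), hij⟩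
      = ∑ q : {p : Fin n × Fin n // p.1 < p.2}, (g q.1 + g (q.1.2, q.1.1)) := by
    rw [Matrix.mulVec]
    simp only [dotProduct]
    refine Finset.sum_congr rfl fun q _ => ?_
    rw [hMA q]
    simp only [svec, hg]
    rw [hXs q.1.1 q.1.2]
    ring
  rw [hmv]
  -- sum over subtype = sum over < and over >
  have hlt : (∑ q : {p : Fin n × Fin n // p.1 < p.2}, g q.1)
      = ∑ q ∈ Finset.univ.filter (fun q : Fin n × Fin n => q.1 < q.2), g q :=
    (Finset.sum_subtype (p := fun q : Fin n × Fin n => q.1 < q.2)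
      (Finset.univ.filter (fun q : Fin n × Fin n => q.1 < q.2)) (fun x => by simp) g).symm
  have hgt : (∑ q : {p : Fin n × Fin n // p.1 < p.2}, g (q.1.2, q.1.1))
      = ∑ q ∈ Finset.univ.filter (fun q : Fin n × Fin n => q.2 < q.1), g q := by
    rw [← Finset.sum_subtype (p := fun q : Fin n × Fin n => q.1 < q.2)
      (Finset.univ.filter (fun q : Fin n × Fin n => q.1 < q.2)) (fun x => by simp)
      (fun q : Fin n × Fin n => g (q.2, q.1))]
    exact Finset.sum_nbij' (fun q => (q.2, q.1)) (fun q => (q.2, q.1))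
      (by simp) (by simp) (by simp) (by simp) (by simp)
  rw [Finset.sum_add_distrib, hlt, hgt]
  have hfull : (∑ q : Fin n × Fin n, g q)
      = (∑ q ∈ Finset.univ.filter (fun q : Fin n × Fin n => q.1 < q.2), g q)
        + ∑ q ∈ Finset.univ.filter (fun q : Fin n × Fin n => q.2 < q.1), g q := by
    rw [← Finset.sum_filter_add_sum_filter_not Finset.univ
      (fun q : Fin n × Fin n => q.1 < q.2) g]
    congr 1
    rw [← Finset.sum_filter_add_sum_filter_not
      (Finset.univ.filter (fun q : Fin n × Fin n => ¬ q.1 < q.2))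
      (fun q : Fin n × Fin n => q.2 < q.1) g, Finset.filter_filter, Finset.filter_filter]
    have h2 : (Finset.univ.filter (fun q : Fin n × Fin n => ¬ q.1 < q.2 ∧ ¬ q.2 < q.1)) =
        Finset.univ.filter (fun q : Fin n × Fin n => q.1 = q.2) := by
      apply Finset.filter_congr
      intro q _
      simp only [not_lt, eq_iff_iff]
      constructor
      · rintro ⟨h1, h2⟩; exact le_antisymm h2 h1
      · intro h; exact ⟨h.ge, h.le⟩
    rw [h2]
    have h3 : (∑ q ∈ Finset.univ.filter (fun q : Fin n × Fin n => q.1 = q.2), g q) = 0 :=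
      Finset.sum_eq_zero fun q hq => by
        simp only [Finset.mem_filter] at hq
        simp only [hg]
        rw [← hq.2, hXd, mul_zero]
    rw [h3, add_zero]
    apply Finset.sum_congr _ (fun _ _ => rfl)
    apply Finset.filter_congr
    intro q _
    simp only [not_lt, eq_iff_iff]
    constructor
    · exact fun ⟨_, h⟩ => h
    · exact fun h => ⟨h.le, h⟩
  rw [← hfull]
  -- final computation
  rw [Fintype.sum_prod_type]
  simp only [hg, hB, Matrix.add_apply, Matrix.kroneckerMap_apply, Matrix.one_apply,
    Matrix.mul_apply, Matrix.transpose_apply, add_mul, ite_mul, one_mul, zero_mul,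
    Finset.sum_add_distrib]
  congr 1
  · refine Finset.sum_congr rfl fun k _ => ?_
    rw [Finset.sum_congr rfl fun l _ => show (A i k * if j = l then 1 else 0) * X k l
        = if l = j then A i k * X k j else 0 from by
          by_cases h : l = j
          · subst h; simp
          · rw [if_neg (fun hh => h hh.symm), if_neg h]; ring]
    simp
  · rw [Finset.sum_comm]
    refine Finset.sum_congr rfl fun l _ => ?_
    rw [Finset.sum_congr rfl fun k _ => show (if i = k then A j l * X k l else 0)
        = if k = i then X i l * A j l else 0 from by
          by_cases h : k = i
          · subst h; simp [mul_comm]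
          · rw [if_neg (fun hh => h hh.symm), if_neg h]]
    simp

lemma Rskew {n : ℕ} (A X : Matrix (Fin n) (Fin n) ℝ) (hX : Xᵀ = -X) :
    (A * X + X * Aᵀ)ᵀ = -(A * X + X * Aᵀ) := by
  rw [Matrix.transpose_add, Matrix.transpose_mul, Matrix.transpose_mul,
    Matrix.transpose_transpose, hX]
  simp only [Matrix.neg_mul, Matrix.mul_neg]
  abel

/-- for `n ≥ 2`, continuous `A : ℝ → ℝ^{n×n}` and differentiable
skew-symmetric-valued `X : ℝ → ℝ^{n×n}`, one has `Ẋ(t) = A(t)X(t) + X(t)A(t)ᵀ` for all `t`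
if and only if `d/dt vec⃗(X(t)) = A(t)^{[2]} vec⃗(X(t))` for all `t`. -/
theorem stmt3 {n : ℕ} (hn : 2 ≤ n)
    (A : ℝ → Matrix (Fin n) (Fin n) ℝ) (hA : Continuous A)
    (X : ℝ → Matrix (Fin n) (Fin n) ℝ)
    (hXdiff : ∀ i j : Fin n, Differentiable ℝ fun t => X t i j)
    (hXskew : ∀ t, (X t)ᵀ = -(X t)) :
    (∀ (t : ℝ) (i j : Fin n),
        HasDerivAt (fun s => X s i j) ((A t * X t + X t * (A t)ᵀ) i j) t)
    ↔ (∀ (t : ℝ) (p : {p : Fin n × Fin n // p.1 < p.2}),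
        HasDerivAt (fun s => svec n (X s) p)
          ((addComp n (A t)).mulVec (svec n (X t)) p) t) := by
  constructor
  · intro h t p
    have := h t p.1.1 p.1.2
    rw [key (A t) (X t) (hXskew t) p]
    exact this
  · intro h t i j
    have hRs := Rskew (A t) (X t) (hXskew t)
    have hRe : ∀ k l, (A t * X t + X t * (A t)ᵀ) l k = -(A t * X t + X t * (A t)ᵀ) k l := by
      intro k l
      have := congrFun (congrFun hRs k) l
      simpa using this
    rcases lt_trichotomy i j with hij | hij | hij
    · have := h t ⟨(i, j), hij⟩
      rw [key (A t) (X t) (hXskew t)] at this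
      exact this
    · subst hij
      have hz : ∀ s, X s i i = 0 := fun s => by
        have := congrFun (congrFun (hXskew s) i) i
        simp only [Matrix.transpose_apply, Matrix.neg_apply] at this
        linarith
      have hR0 : (A t * X t + X t * (A t)ᵀ) i i = 0 := by
        have := hRe i i; linarith
      rw [hR0, show (fun s => X s i i) = fun _ : ℝ => (0 : ℝ) from funext hz]
      exact hasDerivAt_const t 0
    · have hji := h t ⟨(j, i), hij⟩
      rw [key (A t) (X t) (hXskew t)] at hji
      have hfun : (fun s => X s i j) = fun s => -(X s j i) := funext fun s => by
        have := congrFun (congrFun (hXskew s) j) i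
        simpa using this
      rw [hfun, show (A t * X t + X t * (A t)ᵀ) i j = -((A t * X t + X t * (A t)ᵀ) j i)
        from hRe j i]
      exact hji.neg
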